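/- Let H be a graph of maximum degree Δ and girth g, and suppose its line graph L(H) is c-coloured (vertices of L(H) partitioned into c colour classes) such that every monochromatic connected component has at most f vertices, with f < g. If H is Δ-regular with Δ = 2c and has n vertices, then some colour class contains at least n edges of H, and hence contains a cycle of H of length at least g, giving a contradiction; consequently f ≥ g. -/

import Mathlib

open SimpleGraph

namespace Stmt13Aux

variable {W : Type*} [DecidableEq W] (G : SimpleGraph W)

noncomputable def root (x : W) : W := (G.connectedComponentMk x).out

lemma root_reachable (x : W) : G.Reachable (root G x) x := by
  have h : G.connectedComponentMk (root G x) = G.connectedComponentMk x :=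
    (G.connectedComponentMk x).out_eq
  exact (SimpleGraph.ConnectedComponent.eq).mp h

noncomputable def pathTo (x : W) : G.Path (root G x) x :=
  (root_reachable G x).some.toPath

def IsParent (x y : W) : Prop :=
  y ≠ x ∧ G.Adj y x ∧ y ∈ (pathTo G x).1.support

lemma singleEdge_isPath {u v : W} (h : G.Adj u v) :
    (Walk.cons h Walk.nil).IsPath := by
  simp [Walk.cons_isPath_iff, h.ne]

lemma parent_last (hG : G.IsAcyclic) {x y : W} (h : IsParent G x y) :
    ((pathTo G x).1.edges).reverse.head? = some s(y, x) := by
  obtain ⟨hne, hadj, hmem⟩ := h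
  have hdrop : ((pathTo G x).1.dropUntil y hmem) = Walk.cons hadj Walk.nil := by
    have h1 : ((pathTo G x).1.dropUntil y hmem).IsPath := (pathTo G x).2.dropUntil hmem
    have h2 := hG.path_unique ⟨_, h1⟩ ⟨Walk.cons hadj Walk.nil, singleEdge_isPath G hadj⟩
    exact congrArg Subtype.val h2
  conv_lhs => rw [← (pathTo G x).1.take_spec hmem]
  rw [Walk.edges_append, hdrop]
  simp

lemma parent_unique (hG : G.IsAcyclic) {x y₁ y₂ : W}
    (h₁ : IsParent G x y₁) (h₂ : IsParent G x y₂) : y₁ = y₂ := by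
  have e1 := parent_last G hG h₁
  have e2 := parent_last G hG h₂
  rw [e1] at e2
  have h3 : s(y₁, x) = s(y₂, x) := by injection e2
  rcases Sym2.eq_iff.mp h3 with ⟨h, _⟩ | ⟨h, _⟩
  · exact h
  · exact absurd h h₁.1

lemma parent_exists (hG : G.IsAcyclic) {u v : W} (hadj : G.Adj u v) :
    IsParent G u v ∨ IsParent G v u := by
  by_cases hv : v ∈ (pathTo G u).1.support
  · exact Or.inl ⟨hadj.ne', hadj.symm, hv⟩
  · right
    have hroot : root G u = root G v := by
      unfold root
      rw [ConnectedComponent.connectedComponentMk_eq_of_adj hadj]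
    have hpW : (((pathTo G u).1.concat hadj).copy hroot rfl).IsPath := by
      rw [Walk.isPath_copy, ← Walk.isPath_reverse_iff, Walk.reverse_concat,
        Walk.cons_isPath_iff]
      refine ⟨(Walk.isPath_reverse_iff _).mpr (pathTo G u).2, ?_⟩
      rw [Walk.support_reverse, List.mem_reverse]
      exact hv
    have hEq : pathTo G v = ⟨((pathTo G u).1.concat hadj).copy hroot rfl, hpW⟩ :=
      hG.path_unique _ _
    refine ⟨hadj.ne, hadj, ?_⟩
    rw [hEq]
    simp only [Walk.support_copy, Walk.support_concat]
    simpa using Or.inl (Walk.end_mem_support (pathTo G u).1)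

lemma parent_not_root (hG : G.IsAcyclic) {x y : W} (h : IsParent G x y) (z : W) :
    x ≠ root G z := by
  intro hxz
  have hx : root G x = x := by
    rw [hxz]
    unfold root
    congr 1
    exact (G.connectedComponentMk z).out_eq
  have hnil : (pathTo G x).1.copy hx rfl = Walk.nil :=
    Walk.isPath_iff_eq_nil.mp (by rw [Walk.isPath_copy]; exact (pathTo G x).2)
  have hy : y ∈ ((pathTo G x).1.copy hx rfl).support := by
    rw [Walk.support_copy]; exact h.2.2
  rw [hnil] at hy
  simp at hy
  exact h.1 hy

lemma card_edge_lt [Fintype W] [Nonempty W] (hG : G.IsAcyclic) :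
    Nat.card G.edgeSet < Fintype.card W := by
  classical
  obtain ⟨v₀⟩ := ‹Nonempty W›
  have hex : ∀ e : G.edgeSet, ∃ x y : W, (e : Sym2 W) = s(x, y) ∧ IsParent G x y := by
    rintro ⟨e, he⟩
    induction e with
    | h u v =>
      have hadj : G.Adj u v := he
      rcases parent_exists G hG hadj with h | h
      · exact ⟨u, v, rfl, h⟩
      · exact ⟨v, u, Sym2.eq_swap, h⟩
  choose xf yf hxy hpar using hex
  have hinj : Function.Injective xf := by
    intro e₁ e₂ h12
    have h2 : IsParent G (xf e₁) (yf e₂) := h12 ▸ hpar e₂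
    have h3 := parent_unique G hG (hpar e₁) h2
    apply Subtype.ext
    rw [hxy e₁, hxy e₂, h12, h3]
  have key : ∀ e, xf e ≠ root G v₀ := fun e => parent_not_root G hG (hpar e) v₀
  have hinj2 : Function.Injective
      (fun e : G.edgeSet => (⟨xf e, key e⟩ : {w : W // w ≠ root G v₀})) :=
    fun a b h => hinj (by simpa using congrArg Subtype.val h)
  have h1 : Nat.card G.edgeSet ≤ Nat.card {w : W // w ≠ root G v₀} :=
    Nat.card_le_card_of_injective _ hinj2
  have h2 : Nat.card {w : W // w ≠ root G v₀} < Fintype.card W := by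
    rw [Nat.card_eq_fintype_card]
    have h4 := Fintype.card_subtype_compl (fun w : W => w = root G v₀)
    have h5 := Fintype.card_subtype_eq (root G v₀)
    have h6 : Fintype.card {w : W // w ≠ root G v₀}
        = Fintype.card {w : W // ¬ w = root G v₀} := rfl
    have h7 : 1 ≤ Fintype.card W := Fintype.card_pos
    omega
  omega



lemma reach_aux {V : Type} (H : SimpleGraph V) {c : ℕ} (col : H.edgeSet → Fin c) (i : Fin c)
    (Gi : SimpleGraph V)
    (hsub : ∀ e, e ∈ Gi.edgeSet → ∃ h : e ∈ H.edgeSet, col ⟨e, h⟩ = i) :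
    ∀ {a b : V} (p : Gi.Walk a b), p.IsTrail →
      ∀ (x y : {e : H.edgeSet | col e = i}),
        (x.1 : Sym2 V) ∈ p.edges → (y.1 : Sym2 V) ∈ p.edges →
        ((H.lineGraph).induce {e : H.edgeSet | col e = i}).Reachable x y := by
  intro a b p
  induction p with
  | nil => intro _ x y hx _; simp at hx
  | @cons a b' b hadj q ih =>
    intro htrail x y hx hy
    have hxy' : ∀ (z w : {e : H.edgeSet | col e = i}), (z.1 : Sym2 V) = s(a, b') →
        (w.1 : Sym2 V) ∈ q.edges →
        ((H.lineGraph).induce {e : H.edgeSet | col e = i}).Reachable z w := by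
      intro z w hz hw
      cases q with
      | nil => simp at hw
      | @cons b' d b hadj' q' =>
        have he₂ : s(b', d) ∈ Gi.edgeSet :=
          (Walk.cons hadj' q').edges_subset_edgeSet (by simp)
        obtain ⟨hH₂, hcol₂⟩ := hsub _ he₂
        have hne : (z.1 : Sym2 V) ≠ s(b', d) := by
          rw [hz]
          have hnd := htrail.edges_nodup
          simp only [Walk.edges_cons, List.nodup_cons] at hnd
          intro hEq
          exact hnd.1 (by rw [hEq]; simp)
        have hadjT : ((H.lineGraph).induce {e : H.edgeSet | col e = i}).Adj z
            ⟨⟨s(b', d), hH₂⟩, hcol₂⟩ := by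
          refine ⟨?_, ?_⟩
          · intro hEq
            exact hne (congrArg Subtype.val hEq)
          · refine ⟨b', ?_, ?_⟩
            · show b' ∈ (z.1 : Sym2 V)
              rw [hz]; simp
            · show b' ∈ (s(b', d) : Sym2 V)
              simp
        exact hadjT.reachable.trans
          (ih htrail.of_cons ⟨⟨s(b', d), hH₂⟩, hcol₂⟩ w (by simp) hw)
    rw [Walk.edges_cons, List.mem_cons] at hx hy
    rcases hx with hx1 | hx2 <;> rcases hy with hy1 | hy2
    · have : x = y := Subtype.ext (Subtype.ext (hx1.trans hy1.symm))
      rw [this]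
    · exact hxy' x y hx1 hy2
    · exact (hxy' y x hy1 hx2).symm
    · exact ih htrail.of_cons x y hx2 hy2

end Stmt13Aux

/-- Let `H` be a `2c`-regular graph on `n ≥ 1` vertices in which every cycle has length
at least `g` (girth at least `g`).  If the line graph `L(H)` is `c`-coloured so that
every monochromatic connected component has at most `f` vertices, then `f ≥ g`. -/
theorem stmt_13 {V : Type} [Fintype V] [Nonempty V] (H : SimpleGraph V)
    [DecidableRel H.Adj] (c g f : ℕ) (hc : 1 ≤ c)
    (hreg : H.IsRegularOfDegree (2 * c))
    (hgirth : ∀ (u : V) (p : H.Walk u u), p.IsCycle → g ≤ p.length)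
    (col : H.edgeSet → Fin c)
    (hclust : ∀ (i : Fin c)
      (C : ((H.lineGraph).induce {e : H.edgeSet | col e = i}).ConnectedComponent),
      C.supp.ncard ≤ f) :
    g ≤ f := by
  classical
  have hn1 : 1 ≤ Fintype.card V := Fintype.card_pos
  have hEdges : Fintype.card H.edgeSet = c * Fintype.card V := by
    have h2 : 2 * H.edgeFinset.card = 2 * (c * Fintype.card V) := by
      rw [← sum_degrees_eq_twice_card_edges]
      simp only [hreg _]
      rw [Finset.sum_const, smul_eq_mul, Finset.card_univ]
      ring
    have h3 := Nat.eq_of_mul_eq_mul_left (by norm_num : 0 < 2) h2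
    rw [← edgeFinset_card, h3]
  haveI : Nonempty (Fin c) := ⟨⟨0, hc⟩⟩
  obtain ⟨i, hi⟩ := Fintype.exists_le_card_fiber_of_mul_le_card col
    (by rw [hEdges, Fintype.card_fin] : Fintype.card (Fin c) * Fintype.card V ≤ Fintype.card H.edgeSet)
  set Gi := SimpleGraph.fromEdgeSet {e | ∃ h : e ∈ H.edgeSet, col ⟨e, h⟩ = i} with hGi
  have hle : Gi ≤ H := by
    rw [hGi]
    calc fromEdgeSet {e | ∃ h : e ∈ H.edgeSet, col ⟨e, h⟩ = i}
        ≤ fromEdgeSet H.edgeSet := fromEdgeSet_mono (by rintro e ⟨h, _⟩; exact h)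
      _ = H := fromEdgeSet_edgeSet H
  have hGiEdge : Gi.edgeSet = {e | ∃ h : e ∈ H.edgeSet, col ⟨e, h⟩ = i} := by
    rw [hGi, edgeSet_fromEdgeSet]
    ext e
    simp only [Set.mem_diff, Set.mem_setOf_eq, and_iff_left_iff_imp]
    rintro ⟨h, _⟩
    exact H.not_isDiag_of_mem_edgeSet h
  have hsub : ∀ e, e ∈ Gi.edgeSet → ∃ h : e ∈ H.edgeSet, col ⟨e, h⟩ = i := by
    rw [hGiEdge]; exact fun e he => he
  have hcard : Fintype.card V ≤ Nat.card Gi.edgeSet := by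
    have hinj : Function.Injective
        (fun e : {e : H.edgeSet // col e = i} =>
          (⟨e.1.1, by rw [hGiEdge]; exact ⟨e.1.2, e.2⟩⟩ : Gi.edgeSet)) := by
      intro a b h
      apply Subtype.ext
      apply Subtype.ext
      have h2 := congrArg Subtype.val h
      simpa using h2
    calc Fintype.card V ≤ ({x | col x = i} : Finset _).card := hi
      _ = Fintype.card {e : H.edgeSet // col e = i} := by
            rw [Fintype.card_subtype]
      _ = Nat.card {e : H.edgeSet // col e = i} := (Nat.card_eq_fintype_card).symm
      _ ≤ Nat.card Gi.edgeSet := Nat.card_le_card_of_injective _ hinj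
  have hnA : ¬ Gi.IsAcyclic := by
    intro hA
    have := Stmt13Aux.card_edge_lt Gi hA
    omega
  rw [SimpleGraph.IsAcyclic] at hnA
  push_neg at hnA
  obtain ⟨v, p, hp⟩ := hnA
  have hgl : g ≤ p.length := by
    have h1 := hgirth v (p.mapLe hle) (hp.mapLe hle)
    simpa using h1
  have hreach := Stmt13Aux.reach_aux H col i Gi hsub p hp.isCircuit.isTrail
  have h3 : 3 ≤ p.length := hp.three_le_length
  have hlen := p.length_edges
  have hne : p.edges ≠ [] := by
    intro h
    rw [h] at hlen
    simp at hlen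
    omega
  obtain ⟨e₀, he₀⟩ := List.exists_mem_of_ne_nil _ hne
  obtain ⟨hH₀, hcol₀⟩ := hsub _ (p.edges_subset_edgeSet he₀)
  set x₀ : {e : H.edgeSet | col e = i} := ⟨⟨e₀, hH₀⟩, hcol₀⟩ with hx₀
  set C := ((H.lineGraph).induce {e : H.edgeSet | col e = i}).connectedComponentMk x₀ with hC
  set S' : Set {e : H.edgeSet | col e = i} := {y | (y.1 : Sym2 V) ∈ p.edges} with hS'
  have hsupp : S' ⊆ C.supp := by
    intro y hy
    rw [ConnectedComponent.mem_supp_iff]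
    exact ConnectedComponent.sound (hreach y x₀ hy he₀)
  have hinjS : Function.Injective (fun y : {e : H.edgeSet | col e = i} => (y.1 : Sym2 V)) :=
    fun a b h => Subtype.ext (Subtype.ext h)
  have himg : (fun y : {e : H.edgeSet | col e = i} => (y.1 : Sym2 V)) '' S'
      = {e : Sym2 V | e ∈ p.edges} := by
    ext e
    constructor
    · rintro ⟨y, hy, rfl⟩; exact hy
    · intro he
      obtain ⟨hH, hcol⟩ := hsub _ (p.edges_subset_edgeSet he)
      exact ⟨⟨⟨e, hH⟩, hcol⟩, he, rfl⟩
  have hcount2 : p.edges.length ≤ S'.ncard := by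
    have h1 : S'.ncard = ({e : Sym2 V | e ∈ p.edges}).ncard := by
      rw [← himg, Set.ncard_image_of_injective _ hinjS]
    have h2 : ({e : Sym2 V | e ∈ p.edges}).ncard = p.edges.toFinset.card := by
      have : ({e : Sym2 V | e ∈ p.edges}) = ↑p.edges.toFinset := by ext; simp
      rw [this, Set.ncard_coe_finset]
    have h3' : p.edges.toFinset.card = p.edges.length :=
      List.toFinset_card_of_nodup hp.edges_nodup
    omega
  have hfin : S'.ncard ≤ C.supp.ncard := Set.ncard_le_ncard hsupp (Set.toFinite _)
  have hcl := hclust i C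
  omega
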